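/- Let G be a linearly ordered abelian group that is elementarily equivalent, as an L_og-structure, to some archimedean ordered abelian group with small quotients. Let m, n, k ≥ 1 be integers, let g ∈ G, and let a, b ∈ G ∪ {-∞, +∞}. If the set {x ∈ G : a < n•x and k•x < b} (where an inequality is dropped when the corresponding endpoint is -∞ or +∞) is infinite, then the set {x ∈ G : a < n•x, k•x < b, and x - g ∈ mG} is infinite. -/

import Mathlib

open FirstOrder Set

/-- Function symbols of the language of abelian groups: `0`, `-`, `+`. -/
inductive grpFunc : ℕ → Type
  | zero : grpFunc 0
  | neg : grpFunc 1
  | add : grpFunc 2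

/-- Relation symbols of the language of ordered abelian groups: `<`. -/
inductive ogRel : ℕ → Type
  | lt : ogRel 2

/-- The first-order language `L_grp = {+, -, 0}` of abelian groups. -/
def Lgrp : FirstOrder.Language := ⟨grpFunc, fun _ => Empty⟩

/-- The first-order language `L_og = {+, -, 0, <}` of ordered abelian groups. -/
def Log : FirstOrder.Language := ⟨grpFunc, ogRel⟩

/-- The natural `L_grp`-structure on an abelian group. -/
instance grpStructure (G : Type*) [AddCommGroup G] : Lgrp.Structure G where
  funMap {_} f v :=
    match f with
    | .zero => 0
    | .neg => -v 0
    | .add => v 0 + v 1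
  RelMap {_} r _ := r.elim

/-- The natural `L_og`-structure on an ordered abelian group. -/
instance ogStructure (G : Type*) [AddCommGroup G] [LT G] : Log.Structure G where
  funMap {_} f v :=
    match f with
    | .zero => 0
    | .neg => -v 0
    | .add => v 0 + v 1
  RelMap {_} r v :=
    match r with
    | .lt => v 0 < v 1

namespace GIC

open FirstOrder.Language

variable {α : Type*}

def zeroT : Log.Term α := Term.func grpFunc.zero ![]
def addT (t u : Log.Term α) : Log.Term α := Term.func grpFunc.add ![t, u]
def negT (t : Log.Term α) : Log.Term α := Term.func grpFunc.neg ![t]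
def subT (t u : Log.Term α) : Log.Term α := addT t (negT u)
def smulT : ℕ → Log.Term α → Log.Term α
  | 0, _ => zeroT
  | (j+1), t => addT (smulT j t) t

def ltF (t u : Log.Term α) : Log.Formula α := Relations.formula ogRel.lt ![t, u]

variable {M : Type*} [AddCommGroup M] [LT M] (v : α → M)

@[simp] lemma realize_zeroT : Term.realize v (zeroT : Log.Term α) = 0 := rfl
@[simp] lemma realize_addT (t u : Log.Term α) :
    Term.realize v (addT t u) = Term.realize v t + Term.realize v u := rfl
@[simp] lemma realize_negT (t : Log.Term α) :
    Term.realize v (negT t) = -Term.realize v t := rfl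
@[simp] lemma realize_subT (t u : Log.Term α) :
    Term.realize v (subT t u) = Term.realize v t - Term.realize v u := by
  simp [subT, sub_eq_add_neg]
@[simp] lemma realize_smulT (j : ℕ) (t : Log.Term α) :
    Term.realize v (smulT j t) = j • Term.realize v t := by
  induction j with
  | zero => simp [smulT]
  | succ j ih => simp only [smulT, realize_addT, ih, succ_nsmul]

@[simp] lemma realize_ltF (t u : Log.Term α) :
    (ltF t u).Realize v ↔ Term.realize v t < Term.realize v u := by
  simp only [ltF]
  exact Formula.realize_rel

end GIC

namespace GIC
open FirstOrder.Language

variable {α : Type*}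

/-- `∃ y, t - s = m • y`. -/
noncomputable def cosetF (m : ℕ) (t s : Log.Term α) : Log.Formula α :=
  Formula.iExs Unit
    (Term.equal (subT (t.relabel Sum.inl) (s.relabel Sum.inl))
      (smulT m (Term.var (Sum.inr ()))))

variable {M : Type*} [AddCommGroup M] [LT M]

@[simp] lemma realize_cosetF (m : ℕ) (t s : Log.Term α) (v : α → M) :
    (cosetF m t s).Realize v ↔ ∃ y : M, Term.realize v t - Term.realize v s = m • y := by
  simp only [cosetF, Formula.realize_iExs, id_eq, Formula.realize_equal, Term.realize_relabel,
    realize_subT, realize_smulT, Term.realize_var]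
  constructor
  · rintro ⟨i, h⟩
    exact ⟨i (), by simpa using h⟩
  · rintro ⟨y, h⟩
    exact ⟨fun _ => y, by simpa using h⟩

/-- the sentence `χ`:
`∀ g u v, (u < v ∧ v - u ∈ mM) → ∃ z, (u < z ∧ ¬ v < z) ∧ z - g ∈ mM`. -/
noncomputable def chi (m : ℕ) : Log.Sentence :=
  Formula.iAlls (Fin 3)
    (((ltF (Term.var (Sum.inr 1)) (Term.var (Sum.inr 2))) ⊓
        cosetF m (Term.var (Sum.inr 2)) (Term.var (Sum.inr 1))) ⟹
      Formula.iExs Unit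
        (((ltF (Term.var (Sum.inl (Sum.inr 1))) (Term.var (Sum.inr ())) ⊓
            ∼(ltF (Term.var (Sum.inl (Sum.inr 2))) (Term.var (Sum.inr ())))) ⊓
          cosetF m (Term.var (Sum.inr ())) (Term.var (Sum.inl (Sum.inr 0))))))

variable {N : Type*} [AddCommGroup N] [LinearOrder N]

lemma realize_chi {m : ℕ} :
    (N ⊨ chi m) ↔ ∀ g u v : N, u < v → (∃ y : N, v - u = m • y) →
      ∃ z : N, (u < z ∧ z ≤ v) ∧ ∃ y : N, z - g = m • y := by
  simp only [chi, Sentence.Realize, Formula.realize_iAlls, id_eq, Formula.realize_imp,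
    Formula.realize_inf, realize_ltF, realize_cosetF, Formula.realize_iExs, Formula.realize_not,
    Term.realize_var, Sum.elim_inr, Sum.elim_inl]
  constructor
  · intro h g u v huv hc
    obtain ⟨i, hi⟩ := h ![g, u, v] ⟨by simpa using huv, by simpa using hc⟩
    obtain ⟨⟨h1, h2⟩, h3⟩ := hi
    have h2' : ¬ v < i () := by simpa using h2
    exact ⟨i (), ⟨by simpa using h1, not_lt.mp h2'⟩, by simpa using h3⟩
  · intro h i hi
    obtain ⟨z, hz1, hz2⟩ := h (i 0) (i 1) (i 2) (by simpa using hi.1) (by simpa using hi.2)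
    exact ⟨fun _ => z, ⟨by simpa using hz1.1, not_lt.mpr hz1.2⟩, by simpa using hz2⟩

end GIC

namespace GIC
open FirstOrder.Language

/-- the sentence `ρ_d`: `∃ g₁ … g_d, ∀ x, ⋁ i, x - gᵢ ∈ mM`. -/
noncomputable def rho (m d : ℕ) : Log.Sentence :=
  Formula.iExs (Fin d)
    (Formula.iAlls Unit
      (BoundedFormula.iSup (fun i : Fin d =>
        cosetF m (Term.var (Sum.inr ())) (Term.var (Sum.inl (Sum.inr i))))))

variable {N : Type*} [AddCommGroup N] [LinearOrder N]

lemma realize_iSup' {α β : Type*} [Finite β] {f : β → Log.Formula α} {v : α → N} :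
    Formula.Realize (BoundedFormula.iSup f) v ↔ ∃ b, Formula.Realize (f b) v := by
  exact BoundedFormula.realize_iSup

lemma realize_rho {m d : ℕ} :
    (N ⊨ rho m d) ↔ ∃ gs : Fin d → N, ∀ x : N, ∃ i : Fin d, ∃ y : N, x - gs i = m • y := by
  simp only [rho, Sentence.Realize, Formula.realize_iExs, id_eq, Formula.realize_iAlls,
    realize_iSup', Finset.mem_univ, true_and,
    realize_cosetF, Term.realize_var, Sum.elim_inr, Sum.elim_inl]
  constructor
  · rintro ⟨gs, h⟩
    refine ⟨fun i => gs i, fun x => ?_⟩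
    obtain ⟨i, hi⟩ := h fun _ => x
    exact ⟨i, by simpa using hi⟩
  · rintro ⟨gs, h⟩
    refine ⟨fun i => gs i, fun j => ?_⟩
    obtain ⟨i, y, hy⟩ := h (j ())
    exact ⟨i, y, by simpa using hy⟩

end GIC

namespace GIC
open FirstOrder.Language

private lemma key_smul {H : Type*} [AddCommGroup H] (m : ℕ) (t : ℤ) (c : H) :
    t • (m • c) = m • (t • c) := by
  rw [← natCast_zsmul c m, ← natCast_zsmul (t • c) m, smul_smul, smul_smul, mul_comm]

lemma chi_holds (H : Type*) [AddCommGroup H] [LinearOrder H] [IsOrderedAddMonoid H] [Archimedean H] (m : ℕ) :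
    H ⊨ chi m := by
  rw [realize_chi]
  rintro g u v huv ⟨y, hy⟩
  set δ := v - u with hδdef
  have hδ : (0 : H) < δ := sub_pos.2 huv
  obtain ⟨s, ⟨hs1, hs2⟩, -⟩ := existsUnique_zsmul_near_of_pos hδ (g - u)
  have huv' : u + δ = v := by rw [hδdef]; abel
  have hs2' : g - s • δ < u + δ := by
    have h1 : (g - s • δ) - (u + δ) = (g - u) - (s + 1) • δ := by
      rw [add_zsmul, one_zsmul]; abel
    have h2 : (g - s • δ) - (u + δ) < 0 := by rw [h1]; exact sub_neg.mpr hs2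
    exact sub_neg.mp h2
  have hle : u ≤ g - s • δ := by
    have h1 : (0 : H) ≤ (g - u) - s • δ := sub_nonneg.mpr hs1
    have h2 : (g - u) - s • δ = (g - s • δ) - u := by abel
    exact sub_nonneg.mp (h2 ▸ h1)
  rcases eq_or_lt_of_le hle with heq | hlt
  · -- u = g - s • δ, take z = v
    refine ⟨v, ⟨huv, le_refl v⟩, ⟨(1 - s) • y, ?_⟩⟩
    have h3 : v - g = (1 - s) • δ := by
      rw [sub_zsmul, one_zsmul, ← huv', heq]; abel
    rw [h3, hy, key_smul]
  · refine ⟨g - s • δ, ⟨hlt, ?_⟩, ⟨(-s) • y, ?_⟩⟩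
    · rw [← huv']; exact hs2'.le
    · have h3 : g - s • δ - g = (-s) • δ := by rw [neg_zsmul]; abel
      rw [h3, hy, key_smul]

end GIC

namespace GIC
open FirstOrder.Language

lemma rho_holds (H : Type*) [AddCommGroup H] [LinearOrder H] [IsOrderedAddMonoid H] (m : ℕ)
    (hfin : (AddMonoidHom.range (m • AddMonoidHom.id H)).FiniteIndex) :
    H ⊨ rho m (Nat.card (H ⧸ AddMonoidHom.range (m • AddMonoidHom.id H))) := by
  rw [realize_rho]
  set K := AddMonoidHom.range (m • AddMonoidHom.id H) with hK
  haveI := hfin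
  haveI : Finite (H ⧸ K) := K.finite_quotient_of_finiteIndex
  let e := Finite.equivFin (H ⧸ K)
  refine ⟨fun i => Quotient.out (e.symm i), fun x => ⟨e (QuotientAddGroup.mk x), ?_⟩⟩
  have h1 : (QuotientAddGroup.mk (Quotient.out (e.symm (e (QuotientAddGroup.mk x)))) :
      H ⧸ K) = QuotientAddGroup.mk x := by
    rw [Equiv.symm_apply_apply]
    exact Quotient.out_eq _
  have h2 : x - Quotient.out (e.symm (e (QuotientAddGroup.mk x))) ∈ K := by
    have := (QuotientAddGroup.eq).mp h1
    rwa [neg_add_eq_sub] at this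
  obtain ⟨y, hy⟩ := h2
  exact ⟨y, by simpa using hy.symm⟩

end GIC


/-- An abelian group has small quotients if for every `n ≥ 1` the subgroup
`nG = {n • g : g ∈ G}` has finite index in `G`. -/
def SmallQuotients (G : Type*) [AddCommGroup G] : Prop :=
  ∀ n : ℕ, 1 ≤ n → (AddMonoidHom.range (n • AddMonoidHom.id G)).FiniteIndex

/-- Let `G` be a linearly ordered abelian group elementarily equivalent (as an
`L_og`-structure) to some archimedean ordered abelian group with small quotients. For integers
`m, n, k ≥ 1`, `g ∈ G`, and endpoints `a, b ∈ G ∪ {-∞, +∞}` (an endpoint being `none` means the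
corresponding inequality is dropped), if the generalized interval
`{x : a < n•x and k•x < b}` is infinite, then its intersection with the coset `g + mG`
is infinite. -/
theorem genInterval_inter_coset_infinite (G : Type*) [AddCommGroup G] [LinearOrder G] [IsOrderedAddMonoid G]
    (H : Type*) [AddCommGroup H] [LinearOrder H] [IsOrderedAddMonoid H] [Archimedean H] (hH : SmallQuotients H)
    (heq : Log.ElementarilyEquivalent G H)
    (m n k : ℕ) (hm : 1 ≤ m) (hn : 1 ≤ n) (hk : 1 ≤ k)
    (g : G) (a b : Option G)
    (hinf : {x : G | (∀ a' ∈ a, a' < n • x) ∧ ∀ b' ∈ b, k • x < b'}.Infinite) :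
    {x : G | ((∀ a' ∈ a, a' < n • x) ∧ ∀ b' ∈ b, k • x < b') ∧
      ∃ y : G, x - g = m • y}.Infinite := by
  classical
  by_contra hfin
  rw [Set.not_infinite] at hfin
  set S : Set G := {x : G | (∀ a' ∈ a, a' < n • x) ∧ ∀ b' ∈ b, k • x < b'} with hSdef
  -- transfer the two sentences from H to G
  have hchiG : ∀ g' u v : G, u < v → (∃ y : G, v - u = m • y) →
      ∃ z : G, (u < z ∧ z ≤ v) ∧ ∃ y : G, z - g' = m • y :=
    GIC.realize_chi.mp ((heq.realize_sentence (GIC.chi m)).mpr (GIC.chi_holds H m))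
  set d : ℕ := Nat.card (H ⧸ AddMonoidHom.range (m • AddMonoidHom.id H)) with hd
  have hrhoG : ∃ gs : Fin d → G, ∀ x : G, ∃ i : Fin d, ∃ y : G, x - gs i = m • y :=
    GIC.realize_rho.mp ((heq.realize_sentence (GIC.rho m d)).mpr (GIC.rho_holds H m (hH m hm)))
  obtain ⟨gs, hgs⟩ := hrhoG
  choose cIdx cy hc using hgs
  set T' : Finset G := hfin.toFinset with hT'
  have hmemT' : ∀ {z : G}, z ∈ T' ↔ z ∈ S ∧ ∃ y : G, z - g = m • y := by
    intro z
    rw [hT', Set.Finite.mem_toFinset]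
    exact Iff.rfl
  -- convexity of S
  have hconv : ∀ {u v z : G}, u ∈ S → v ∈ S → u ≤ z → z ≤ v → z ∈ S := by
    intro u v z hu hv huz hzv
    exact ⟨fun a' ha' => lt_of_lt_of_le (hu.1 a' ha') (nsmul_le_nsmul_right huz n),
      fun b' hb' => lt_of_le_of_lt (nsmul_le_nsmul_right hzv k) (hv.2 b' hb')⟩
  have hS' : (S \ ↑T').Infinite := hinf.diff T'.finite_toSet
  haveI := hS'.to_subtype
  let F : ↥(S \ ↑T') → Finset {x // x ∈ T'} :=
    fun s => T'.attach.filter fun t => (t : G) < (s : G)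
  -- the key contradiction step
  have key : ∀ p q : ↥(S \ ↑T'), F p = F q → (p : G) < (q : G) →
      cIdx (p : G) = cIdx (q : G) → False := by
    intro p q hF hlt hcix
    have e1 := hc (p : G)
    have e2 := hc (q : G)
    rw [hcix] at e1
    have hdiff : (q : G) - (p : G) = m • (cy (q : G) - cy (p : G)) := by
      rw [smul_sub, ← e1, ← e2]; abel
    obtain ⟨z, ⟨hz1, hz2⟩, y₃, hz3⟩ := hchiG g (p : G) (q : G) hlt ⟨_, hdiff⟩
    have hpS : (p : G) ∈ S := p.2.1
    have hqS : (q : G) ∈ S := q.2.1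
    have hzS : z ∈ S := hconv hpS hqS hz1.le hz2
    have hzT' : z ∈ T' := hmemT'.mpr ⟨hzS, y₃, hz3⟩
    rcases eq_or_lt_of_le hz2 with heqv | hltv
    · exact q.2.2 (by rw [heqv] at hzT'; exact Finset.mem_coe.mpr hzT')
    · have hmem : (⟨z, hzT'⟩ : {x // x ∈ T'}) ∈ F q := by
        simp only [F, Finset.mem_filter, Finset.mem_attach, true_and]
        exact hltv
      rw [← hF] at hmem
      have : z < (p : G) := by
        simpa only [F, Finset.mem_filter, Finset.mem_attach, true_and] using hmem
      exact absurd hz1 (not_lt.mpr this.le)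
  obtain ⟨w, hw⟩ := Finite.exists_infinite_fiber F
  have hfib : (F ⁻¹' {w}).Infinite := Set.infinite_coe_iff.mp hw
  obtain ⟨t, hts, htc⟩ := hfib.exists_subset_card_eq (d + 1)
  obtain ⟨p, hp, q, hq, hpq, hcpq⟩ :=
    Finset.exists_ne_map_eq_of_card_lt_of_maps_to
      (s := t) (t := (Finset.univ : Finset (Fin d))) (f := fun s => cIdx (s : G))
      (by simp [htc]) (fun _ _ => Finset.mem_univ _)
  have hFp : F p = w := hts hp
  have hFq : F q = w := hts hq
  have hval : (p : G) ≠ (q : G) := fun h => hpq (Subtype.ext h)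
  rcases hval.lt_or_gt with hlt | hlt
  · exact key p q (hFp.trans hFq.symm) hlt hcpq
  · exact key q p (hFq.trans hFp.symm) hlt hcpq.symm
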